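/- Let R_ρ, R_η > 0, α ∈ ℝ, and let S_ρ, S_η, K : ℝ→ℝ be C² and even. For p ∈ C¹([0,R_ρ]) with p(0)=0 and q ∈ C¹([0,R_η]) with q(0)=0, define f(x) = ∫₀^{R_ρ}(S_ρ(x−y)−S_ρ(x+y))p(y)dy + ∫₀^{R_η}(K(x−y)−K(x+y))q(y)dy for x∈[0,R_ρ] and g(x) = ∫₀^{R_η}(S_η(x−y)−S_η(x+y))q(y)dy − α∫₀^{R_ρ}(K(x−y)−K(x+y))p(y)dy for x∈[0,R_η]. Then f and g are C¹ with f(0)=g(0)=0, the map T:(p,q)↦(f,g) is linear, and T is compact for the W^{1,∞} norm: for every sequence (p_n,q_n) with sup_n(‖p_n‖_∞+‖p_n'‖_∞+‖q_n‖_∞+‖q_n'‖_∞)<∞, there is a subsequence along which f_n, f_n', g_n, g_n' all converge uniformly on their respective intervals. -/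

import Mathlib

open MeasureTheory Filter

section AuxAop


noncomputable def Aop (W : ℝ → ℝ) (r : ℝ) (u : ℝ → ℝ) (x : ℝ) : ℝ :=
  ∫ y in (0:ℝ)..r, (W (x - y) - W (x + y)) * u y

lemma kerCont {W : ℝ → ℝ} (hW : Continuous W) (x : ℝ) :
    Continuous (fun y => W (x - y) - W (x + y)) :=
  ((hW.comp (continuous_const.sub continuous_id)).sub
    (hW.comp (continuous_const.add continuous_id)))

lemma aop_intble {W : ℝ → ℝ} (hW : Continuous W) {r : ℝ} (hr : 0 < r) {u : ℝ → ℝ}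
    (hu : ContinuousOn u (Set.Icc 0 r)) (x : ℝ) :
    IntervalIntegrable (fun y => (W (x - y) - W (x + y)) * u y) volume 0 r := by
  apply ContinuousOn.intervalIntegrable
  apply ContinuousOn.mul (kerCont hW x).continuousOn
  exact hu.mono (by rw [Set.uIcc_of_le hr.le])

lemma aop_hasDerivAt {W : ℝ → ℝ} (hW : ContDiff ℝ 1 W) {r : ℝ} (hr : 0 < r) {u : ℝ → ℝ}
    (hu : ContinuousOn u (Set.Icc 0 r)) (x₀ : ℝ) :
    HasDerivAt (Aop W r u) (Aop (deriv W) r u x₀) x₀ := by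
  have hWc : Continuous W := hW.continuous
  have hW' : Continuous (deriv W) := hW.continuous_deriv le_rfl
  obtain ⟨C, hC⟩ := (isCompact_Icc (a := x₀ - 1 - r) (b := x₀ + 1 + r)).exists_bound_of_continuousOn
    hW'.continuousOn
  have hIoc : Set.uIoc (0:ℝ) r ⊆ Set.Icc 0 r := by
    rw [Set.uIoc_of_le hr.le]; exact Set.Ioc_subset_Icc_self
  have key := intervalIntegral.hasDerivAt_integral_of_dominated_loc_of_deriv_le
      (𝕜 := ℝ) (μ := volume) (a := 0) (b := r)
      (F := fun x y => (W (x - y) - W (x + y)) * u y)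
      (F' := fun x y => (deriv W (x - y) - deriv W (x + y)) * u y)
      (bound := fun y => (2 * C) * |u y|) (x₀ := x₀) (Metric.ball_mem_nhds x₀ one_pos)
      ?_ ?_ ?_ ?_ ?_ ?_
  · exact key.2
  · filter_upwards with x
    exact (((kerCont hWc x).continuousOn.mul (hu.mono hIoc)).aestronglyMeasurable
      measurableSet_uIoc)
  · exact aop_intble hWc hr hu x₀
  · exact (((kerCont hW' x₀).continuousOn.mul (hu.mono hIoc)).aestronglyMeasurable
      measurableSet_uIoc)
  · filter_upwards with t ht x hx
    have ht' := hIoc ht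
    have h1 : x - t ∈ Set.Icc (x₀ - 1 - r) (x₀ + 1 + r) := by
      simp only [Metric.mem_ball, Real.dist_eq] at hx
      constructor <;>
        · rcases abs_lt.mp hx with ⟨a, b⟩; rcases ht' with ⟨c, d⟩; linarith
    have h2 : x + t ∈ Set.Icc (x₀ - 1 - r) (x₀ + 1 + r) := by
      simp only [Metric.mem_ball, Real.dist_eq] at hx
      constructor <;>
        · rcases abs_lt.mp hx with ⟨a, b⟩; rcases ht' with ⟨c, d⟩; linarith
    have := hC _ h1
    have := hC _ h2
    calc ‖(deriv W (x - t) - deriv W (x + t)) * u t‖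
        = |deriv W (x - t) - deriv W (x + t)| * |u t| := by
          rw [Real.norm_eq_abs, abs_mul]
      _ ≤ (2 * C) * |u t| := by
          apply mul_le_mul_of_nonneg_right _ (abs_nonneg _)
          calc |deriv W (x - t) - deriv W (x + t)|
              ≤ |deriv W (x - t)| + |deriv W (x + t)| := abs_sub _ _
            _ ≤ 2 * C := by simp only [Real.norm_eq_abs] at *; linarith
  · apply ContinuousOn.intervalIntegrable
    apply ContinuousOn.mul continuousOn_const
    exact (continuous_abs.comp_continuousOn (hu.mono (by rw [Set.uIcc_of_le hr.le])))
  · filter_upwards with t ht x hx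
    have hdW : ∀ z : ℝ, HasDerivAt W (deriv W z) z := fun z =>
      ((hW.differentiable one_ne_zero) z).hasDerivAt
    have h1 : HasDerivAt (fun x : ℝ => W (x - t)) (deriv W (x - t)) x := by
      have h := (hdW (x - t)).comp x ((hasDerivAt_id x).sub_const t); simp at h; exact h
    have h2 : HasDerivAt (fun x : ℝ => W (x + t)) (deriv W (x + t)) x := by
      have h := (hdW (x + t)).comp x ((hasDerivAt_id x).add_const t); simp at h; exact h
    exact (h1.sub h2).mul_const (u t)

lemma deriv_contDiff_of_two {W : ℝ → ℝ} (hW : ContDiff ℝ 2 W) : ContDiff ℝ 1 (deriv W) := by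
  have := (contDiff_succ_iff_deriv (n := 1)).mp (by exact_mod_cast hW)
  exact this.2.2

lemma aop_deriv {W : ℝ → ℝ} (hW : ContDiff ℝ 1 W) {r : ℝ} (hr : 0 < r) {u : ℝ → ℝ}
    (hu : ContinuousOn u (Set.Icc 0 r)) :
    deriv (Aop W r u) = Aop (deriv W) r u :=
  funext fun x => (aop_hasDerivAt hW hr hu x).deriv

lemma aop_contDiff {W : ℝ → ℝ} (hW : ContDiff ℝ 2 W) {r : ℝ} (hr : 0 < r) {u : ℝ → ℝ}
    (hu : ContinuousOn u (Set.Icc 0 r)) :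
    ContDiff ℝ 1 (Aop W r u) := by
  have hW' : ContDiff ℝ 1 (deriv W) := deriv_contDiff_of_two hW
  rw [contDiff_one_iff_deriv]
  refine ⟨fun x => (aop_hasDerivAt (hW.of_le one_le_two) hr hu x).differentiableAt, ?_⟩
  rw [aop_deriv (hW.of_le one_le_two) hr hu]
  exact continuous_iff_continuousAt.mpr fun x =>
    ((aop_hasDerivAt hW' hr hu x).differentiableAt).continuousAt

lemma aop_zero {W : ℝ → ℝ} (hWe : ∀ x, W (-x) = W x) (r : ℝ) (u : ℝ → ℝ) :
    Aop W r u 0 = 0 := by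
  have : ∀ y : ℝ, (W (0 - y) - W (0 + y)) * u y = 0 := by
    intro y
    have : W (0 - y) = W y := by rw [zero_sub, hWe]
    rw [this, zero_add, sub_self, zero_mul]
  simp only [Aop, this, intervalIntegral.integral_zero]

lemma aop_add {W : ℝ → ℝ} (hW : Continuous W) {r : ℝ} (hr : 0 < r) {u v : ℝ → ℝ}
    (hu : ContinuousOn u (Set.Icc 0 r)) (hv : ContinuousOn v (Set.Icc 0 r)) (x : ℝ) :
    Aop W r (u + v) x = Aop W r u x + Aop W r v x := by
  unfold Aop
  rw [← intervalIntegral.integral_add (aop_intble hW hr hu x) (aop_intble hW hr hv x)]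
  apply intervalIntegral.integral_congr
  intro y _
  simp [mul_add]

lemma aop_smul (W : ℝ → ℝ) (r : ℝ) (c : ℝ) (u : ℝ → ℝ) (x : ℝ) :
    Aop W r (c • u) x = c * Aop W r u x := by
  unfold Aop
  rw [← intervalIntegral.integral_const_mul]
  apply intervalIntegral.integral_congr
  intro y _
  simp [Pi.smul_apply, smul_eq_mul]; ring

lemma aop_close {W : ℝ → ℝ} {r r' M ε : ℝ} (hr : 0 < r) (hr' : 0 ≤ r')
    {u v : ℝ → ℝ} (hW : Continuous W)
    (hu : ContinuousOn u (Set.Icc 0 r)) (hv : ContinuousOn v (Set.Icc 0 r))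
    (hM : ∀ z ∈ Set.Icc (-(r + r')) (r + r'), |W z| ≤ M)
    (huv : ∀ y ∈ Set.Icc 0 r, |u y - v y| ≤ ε) :
    ∀ x ∈ Set.Icc 0 r', |Aop W r u x - Aop W r v x| ≤ 2 * M * ε * r := by
  intro x hx
  have heq : Aop W r u x - Aop W r v x
      = ∫ y in (0:ℝ)..r, (W (x - y) - W (x + y)) * (u y - v y) := by
    unfold Aop
    rw [← intervalIntegral.integral_sub (aop_intble hW hr hu x) (aop_intble hW hr hv x)]
    apply intervalIntegral.integral_congr
    intro y _; ring
  rw [heq]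
  have := intervalIntegral.norm_integral_le_of_norm_le_const
    (C := 2 * M * ε) (a := (0:ℝ)) (b := r)
    (f := fun y => (W (x - y) - W (x + y)) * (u y - v y)) ?_
  · rw [Real.norm_eq_abs] at this
    calc |∫ y in (0:ℝ)..r, (W (x - y) - W (x + y)) * (u y - v y)|
        ≤ 2 * M * ε * |r - 0| := this
      _ = 2 * M * ε * r := by rw [sub_zero, abs_of_pos hr]
  · intro y hy
    rw [Set.uIoc_of_le hr.le] at hy
    have hy' : y ∈ Set.Icc 0 r := Set.Ioc_subset_Icc_self hy
    have h1 : x - y ∈ Set.Icc (-(r + r')) (r + r') := by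
      rcases hx with ⟨a, b⟩; rcases hy' with ⟨c, d⟩
      rw [Set.mem_Icc]; constructor <;> linarith
    have h2 : x + y ∈ Set.Icc (-(r + r')) (r + r') := by
      rcases hx with ⟨a, b⟩; rcases hy' with ⟨c, d⟩
      rw [Set.mem_Icc]; constructor <;> linarith
    have e1 := hM _ h1; have e2 := hM _ h2
    have e3 := huv y hy'
    rw [Real.norm_eq_abs, abs_mul]
    have hMn : 0 ≤ M := le_trans (abs_nonneg _) e1
    calc |W (x - y) - W (x + y)| * |u y - v y|
        ≤ (|W (x - y)| + |W (x + y)|) * |u y - v y| :=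
          mul_le_mul_of_nonneg_right (abs_sub _ _) (abs_nonneg _)
      _ ≤ (2 * M) * ε := by
          apply mul_le_mul (by linarith) e3 (abs_nonneg _) (by linarith)
      _ = 2 * M * ε := rfl

lemma aop_tendstoUniformlyOn {W : ℝ → ℝ} (hW : Continuous W) {r r' : ℝ} (hr : 0 < r)
    (hr' : 0 ≤ r') {u : ℕ → ℝ → ℝ} {ub : ℝ → ℝ}
    (hu : ∀ k, ContinuousOn (u k) (Set.Icc 0 r)) (hub : ContinuousOn ub (Set.Icc 0 r))
    (hconv : TendstoUniformlyOn u ub atTop (Set.Icc 0 r)) :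
    TendstoUniformlyOn (fun k => Aop W r (u k)) (Aop W r ub) atTop (Set.Icc 0 r') := by
  obtain ⟨M, hM⟩ := (isCompact_Icc (a := -(r + r')) (b := r + r')).exists_bound_of_continuousOn
    hW.continuousOn
  simp only [Real.norm_eq_abs] at hM
  have hM0 : 0 ≤ M := (abs_nonneg _).trans (hM 0 (by constructor <;> nlinarith))
  rw [Metric.tendstoUniformlyOn_iff] at hconv ⊢
  intro ε hε
  set δ := ε / (2 * M * r + 1) with hδdef
  have hden : 0 < 2 * M * r + 1 := by nlinarith
  have hδ : 0 < δ := div_pos hε hden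
  filter_upwards [hconv δ hδ] with k hk x hx
  have huv : ∀ y ∈ Set.Icc (0:ℝ) r, |u k y - ub y| ≤ δ := by
    intro y hy
    have := hk y hy
    rw [Real.dist_eq, abs_sub_comm] at this
    exact this.le
  have := aop_close hr hr' hW (hu k) hub hM huv x hx
  rw [Real.dist_eq, abs_sub_comm]
  calc |Aop W r (u k) x - Aop W r ub x| ≤ 2 * M * δ * r := this
    _ < ε := by
        have h2 : δ * (2 * M * r + 1) = ε := div_mul_cancel₀ _ hden.ne'
        nlinarith

lemma tuo_const_mul {ι : Type*} {l : Filter ι} {s : Set ℝ} (c : ℝ) {F : ι → ℝ → ℝ} {f : ℝ → ℝ}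
    (h : TendstoUniformlyOn F f l s) :
    TendstoUniformlyOn (fun k x => c * F k x) (fun x => c * f x) l s := by
  rw [Metric.tendstoUniformlyOn_iff] at h ⊢
  intro ε hε
  have hc : 0 < |c| + 1 := by positivity
  filter_upwards [h (ε / (|c| + 1)) (div_pos hε hc)] with k hk x hx
  have := hk x hx
  rw [Real.dist_eq] at this ⊢
  calc |c * f x - c * F k x| = |c| * |f x - F k x| := by rw [← abs_mul]; ring_nf
    _ ≤ |c| * (ε / (|c| + 1)) := by
        apply mul_le_mul_of_nonneg_left this.le (abs_nonneg _)
    _ < ε := by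
        rw [div_eq_inv_mul]
        have h1 : |c| < |c| + 1 := by linarith
        calc |c| * ((|c| + 1)⁻¹ * ε) = (|c| / (|c| + 1)) * ε := by ring
          _ < 1 * ε := by
              apply mul_lt_mul_of_pos_right _ hε
              rw [div_lt_one hc]; exact h1
          _ = ε := one_mul ε

lemma tuo_subseq {F : ℕ → ℝ → ℝ} {f : ℝ → ℝ} {s : Set ℝ}
    (h : TendstoUniformlyOn F f atTop s) {ψ : ℕ → ℕ} (hψ : StrictMono ψ) :
    TendstoUniformlyOn (fun k => F (ψ k)) f atTop s :=
  fun u hu => (hψ.tendsto_atTop).eventually (h u hu)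

lemma exists_subseq_unif {r B : ℝ} (hr : 0 < r) (u : ℕ → ℝ → ℝ)
    (hu : ∀ n, ContDiffOn ℝ 1 (u n) (Set.Icc 0 r))
    (hB : ∀ n, ∀ x ∈ Set.Icc (0:ℝ) r, |u n x| ≤ B ∧ |derivWithin (u n) (Set.Icc 0 r) x| ≤ B) :
    ∃ φ : ℕ → ℕ, StrictMono φ ∧ ∃ ub : ℝ → ℝ, Continuous ub ∧
      TendstoUniformlyOn (fun k => u (φ k)) ub atTop (Set.Icc 0 r) := by
  haveI : CompactSpace (Set.Icc (0:ℝ) r) := isCompact_iff_compactSpace.mp isCompact_Icc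
  have h0 : (0:ℝ) ∈ Set.Icc (0:ℝ) r := ⟨le_refl 0, hr.le⟩
  have hB0 : 0 ≤ B := (abs_nonneg _).trans ((hB 0 0 h0).1)
  have hlip : ∀ n, LipschitzOnWith B.toNNReal (u n) (Set.Icc 0 r) := by
    intro n
    apply (convex_Icc (0:ℝ) r).lipschitzOnWith_of_nnnorm_derivWithin_le
      ((hu n).differentiableOn one_ne_zero)
    intro x hx
    rw [← NNReal.coe_le_coe, coe_nnnorm, Real.coe_toNNReal _ hB0, Real.norm_eq_abs]
    exact (hB n x hx).2
  set X := Set.Icc (0:ℝ) r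
  let U : ℕ → BoundedContinuousFunction X ℝ := fun n =>
    BoundedContinuousFunction.mkOfCompact ⟨X.restrict (u n), ((hu n).continuousOn).restrict⟩
  set A : Set (BoundedContinuousFunction X ℝ) :=
    {f | (∀ x, f x ∈ Set.Icc (-B) B) ∧ LipschitzWith B.toNNReal ⇑f} with hA
  have hcomp : IsCompact (closure A) := by
    apply BoundedContinuousFunction.arzela_ascoli (Set.Icc (-B) B) isCompact_Icc A
      (fun f x hf => hf.1 x)
    apply Metric.equicontinuous_of_continuity_modulus (fun t => B * t)
      (by exact (continuous_const.mul continuous_id).tendsto' 0 0 (by simp))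
    rintro x y ⟨f, hf⟩
    have := hf.2.dist_le_mul x y
    rwa [Real.coe_toNNReal _ hB0] at this
  have hUA : ∀ n, U n ∈ A := by
    intro n
    constructor
    · intro x
      exact abs_le.mp (hB n x x.2).1
    · exact lipschitzOnWith_iff_restrict.mp (hlip n)
  obtain ⟨L, _, φ, hφ, hconv⟩ := hcomp.tendsto_subseq (fun n => subset_closure (hUA n))
  refine ⟨φ, hφ, fun y => L (Set.projIcc 0 r hr.le y),
    L.continuous.comp continuous_projIcc, ?_⟩
  rw [Metric.tendstoUniformlyOn_iff]
  intro ε hε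
  have := (Metric.tendsto_nhds.mp hconv) ε hε
  filter_upwards [this] with k hk y hy
  have h1 : L (Set.projIcc 0 r hr.le y) = L ⟨y, hy⟩ := by
    rw [Set.projIcc_of_mem]
  rw [h1]
  have h2 : u (φ k) y = (U (φ k)) ⟨y, hy⟩ := rfl
  rw [h2]
  calc dist (L ⟨y, hy⟩) ((U (φ k)) ⟨y, hy⟩)
      ≤ dist (L) (U (φ k)) := BoundedContinuousFunction.dist_coe_le_dist _
    _ < ε := by rwa [dist_comm] at hk

end AuxAop

/-- The first component of the Krein–Rutman operator. -/
noncomputable def mixOpF (Sρ K : ℝ → ℝ) (Rρ Rη : ℝ) (p q : ℝ → ℝ) (x : ℝ) : ℝ :=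
  (∫ y in (0 : ℝ)..Rρ, (Sρ (x - y) - Sρ (x + y)) * p y) +
    ∫ y in (0 : ℝ)..Rη, (K (x - y) - K (x + y)) * q y

/-- The second component of the Krein–Rutman operator. -/
noncomputable def mixOpG (Sη K : ℝ → ℝ) (Rρ Rη α : ℝ) (p q : ℝ → ℝ) (x : ℝ) : ℝ :=
  (∫ y in (0 : ℝ)..Rη, (Sη (x - y) - Sη (x + y)) * q y) -
    α * ∫ y in (0 : ℝ)..Rρ, (K (x - y) - K (x + y)) * p y

lemma mixOpF_eq (Sρ K : ℝ → ℝ) (Rρ Rη : ℝ) (p q : ℝ → ℝ) :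
    mixOpF Sρ K Rρ Rη p q = fun x => Aop Sρ Rρ p x + Aop K Rη q x := rfl

lemma mixOpG_eq (Sη K : ℝ → ℝ) (Rρ Rη α : ℝ) (p q : ℝ → ℝ) :
    mixOpG Sη K Rρ Rη α p q = fun x => Aop Sη Rη q x - α * Aop K Rρ p x := rfl

lemma derivF_eq {Sρ K : ℝ → ℝ} {Rρ Rη : ℝ} {p q : ℝ → ℝ}
    (hSρ : ContDiff ℝ 1 Sρ) (hK : ContDiff ℝ 1 K) (hRρ : 0 < Rρ) (hRη : 0 < Rη)
    (hp : ContinuousOn p (Set.Icc 0 Rρ)) (hq : ContinuousOn q (Set.Icc 0 Rη)) :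
    deriv (mixOpF Sρ K Rρ Rη p q)
      = fun x => Aop (deriv Sρ) Rρ p x + Aop (deriv K) Rη q x :=
  funext fun x => ((aop_hasDerivAt hSρ hRρ hp x).add (aop_hasDerivAt hK hRη hq x)).deriv

lemma derivG_eq {Sη K : ℝ → ℝ} {Rρ Rη α : ℝ} {p q : ℝ → ℝ}
    (hSη : ContDiff ℝ 1 Sη) (hK : ContDiff ℝ 1 K) (hRρ : 0 < Rρ) (hRη : 0 < Rη)
    (hp : ContinuousOn p (Set.Icc 0 Rρ)) (hq : ContinuousOn q (Set.Icc 0 Rη)) :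
    deriv (mixOpG Sη K Rρ Rη α p q)
      = fun x => Aop (deriv Sη) Rη q x - α * Aop (deriv K) Rρ p x :=
  funext fun x =>
    ((aop_hasDerivAt hSη hRη hq x).sub ((aop_hasDerivAt hK hRρ hp x).const_mul α)).deriv

/-- The operator `T : (p,q) ↦ (f,g)` is well defined on C¹ profiles vanishing at the origin,
is linear, and is compact for the W^{1,∞} norm. -/
theorem stmt_8 (Rρ Rη α : ℝ) (hRρ : 0 < Rρ) (hRη : 0 < Rη)
    (Sρ Sη K : ℝ → ℝ)
    (hSρ : ContDiff ℝ 2 Sρ) (hSη : ContDiff ℝ 2 Sη) (hK : ContDiff ℝ 2 K)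
    (hSρe : ∀ x, Sρ (-x) = Sρ x) (hSηe : ∀ x, Sη (-x) = Sη x) (hKe : ∀ x, K (-x) = K x) :
    -- f and g are C¹ and vanish at 0
    (∀ p q : ℝ → ℝ, ContDiffOn ℝ 1 p (Set.Icc 0 Rρ) → ContDiffOn ℝ 1 q (Set.Icc 0 Rη) →
      p 0 = 0 → q 0 = 0 →
      ContDiffOn ℝ 1 (mixOpF Sρ K Rρ Rη p q) (Set.Icc 0 Rρ) ∧
      mixOpF Sρ K Rρ Rη p q 0 = 0 ∧
      ContDiffOn ℝ 1 (mixOpG Sη K Rρ Rη α p q) (Set.Icc 0 Rη) ∧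
      mixOpG Sη K Rρ Rη α p q 0 = 0) ∧
    -- linearity of T
    (∀ p₁ q₁ p₂ q₂ : ℝ → ℝ,
      ContDiffOn ℝ 1 p₁ (Set.Icc 0 Rρ) → ContDiffOn ℝ 1 q₁ (Set.Icc 0 Rη) →
      ContDiffOn ℝ 1 p₂ (Set.Icc 0 Rρ) → ContDiffOn ℝ 1 q₂ (Set.Icc 0 Rη) →
      ∀ c : ℝ,
        (∀ x, mixOpF Sρ K Rρ Rη (p₁ + p₂) (q₁ + q₂) x
            = mixOpF Sρ K Rρ Rη p₁ q₁ x + mixOpF Sρ K Rρ Rη p₂ q₂ x) ∧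
        (∀ x, mixOpG Sη K Rρ Rη α (p₁ + p₂) (q₁ + q₂) x
            = mixOpG Sη K Rρ Rη α p₁ q₁ x + mixOpG Sη K Rρ Rη α p₂ q₂ x) ∧
        (∀ x, mixOpF Sρ K Rρ Rη (c • p₁) (c • q₁) x = c * mixOpF Sρ K Rρ Rη p₁ q₁ x) ∧
        (∀ x, mixOpG Sη K Rρ Rη α (c • p₁) (c • q₁) x = c * mixOpG Sη K Rρ Rη α p₁ q₁ x)) ∧
    -- compactness of T for the W^{1,∞} norm
    (∀ p q : ℕ → ℝ → ℝ,
      (∀ n, ContDiffOn ℝ 1 (p n) (Set.Icc 0 Rρ) ∧ p n 0 = 0) →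
      (∀ n, ContDiffOn ℝ 1 (q n) (Set.Icc 0 Rη) ∧ q n 0 = 0) →
      (∃ B : ℝ, ∀ n, (∀ x ∈ Set.Icc (0 : ℝ) Rρ,
          |p n x| ≤ B ∧ |derivWithin (p n) (Set.Icc 0 Rρ) x| ≤ B) ∧
        (∀ x ∈ Set.Icc (0 : ℝ) Rη,
          |q n x| ≤ B ∧ |derivWithin (q n) (Set.Icc 0 Rη) x| ≤ B)) →
      ∃ φ : ℕ → ℕ, StrictMono φ ∧
        ∃ f g f' g' : ℝ → ℝ,
          TendstoUniformlyOn (fun k => mixOpF Sρ K Rρ Rη (p (φ k)) (q (φ k))) f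
            atTop (Set.Icc 0 Rρ) ∧
          TendstoUniformlyOn (fun k => deriv (mixOpF Sρ K Rρ Rη (p (φ k)) (q (φ k)))) f'
            atTop (Set.Icc 0 Rρ) ∧
          TendstoUniformlyOn (fun k => mixOpG Sη K Rρ Rη α (p (φ k)) (q (φ k))) g
            atTop (Set.Icc 0 Rη) ∧
          TendstoUniformlyOn (fun k => deriv (mixOpG Sη K Rρ Rη α (p (φ k)) (q (φ k)))) g'
            atTop (Set.Icc 0 Rη)) := by

  have hSρ1 : ContDiff ℝ 1 Sρ := hSρ.of_le one_le_two
  have hSη1 : ContDiff ℝ 1 Sη := hSη.of_le one_le_two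
  have hK1 : ContDiff ℝ 1 K := hK.of_le one_le_two
  refine ⟨?_, ?_, ?_⟩
  · -- Part 1
    intro p q hp hq _ _
    refine ⟨?_, ?_, ?_, ?_⟩
    · rw [mixOpF_eq]
      exact ((aop_contDiff hSρ hRρ hp.continuousOn).add
        (aop_contDiff hK hRη hq.continuousOn)).contDiffOn
    · rw [mixOpF_eq]
      simp only [aop_zero hSρe, aop_zero hKe, add_zero]
    · rw [mixOpG_eq]
      exact ((aop_contDiff hSη hRη hq.continuousOn).sub
        (contDiff_const.mul (aop_contDiff hK hRρ hp.continuousOn))).contDiffOn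
    · rw [mixOpG_eq]
      simp only [aop_zero hSηe, aop_zero hKe, mul_zero, sub_zero]
  · -- Part 2: linearity
    intro p₁ q₁ p₂ q₂ hp₁ hq₁ hp₂ hq₂ c
    refine ⟨?_, ?_, ?_, ?_⟩
    · intro x
      simp only [mixOpF_eq]
      rw [aop_add hSρ1.continuous hRρ hp₁.continuousOn hp₂.continuousOn,
        aop_add hK1.continuous hRη hq₁.continuousOn hq₂.continuousOn]
      ring
    · intro x
      simp only [mixOpG_eq]
      rw [aop_add hSη1.continuous hRη hq₁.continuousOn hq₂.continuousOn,
        aop_add hK1.continuous hRρ hp₁.continuousOn hp₂.continuousOn]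
      ring
    · intro x
      simp only [mixOpF_eq]
      rw [aop_smul, aop_smul]
      ring
    · intro x
      simp only [mixOpG_eq]
      rw [aop_smul, aop_smul]
      ring
  · -- Part 3: compactness
    intro p q hp hq hBex
    obtain ⟨B, hB⟩ := hBex
    obtain ⟨φ₁, hφ₁, pbar, hpbarC, hpconv⟩ :=
      exists_subseq_unif hRρ p (fun n => (hp n).1) (fun n => (hB n).1)
    obtain ⟨φ₂, hφ₂, qbar, hqbarC, hqconv⟩ :=
      exists_subseq_unif hRη (fun n => q (φ₁ n)) (fun n => (hq (φ₁ n)).1)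
        (fun n => (hB (φ₁ n)).2)
    set φ : ℕ → ℕ := φ₁ ∘ φ₂ with hφdef
    have hφ : StrictMono φ := hφ₁.comp hφ₂
    have hpconv' : TendstoUniformlyOn (fun k => p (φ k)) pbar atTop (Set.Icc 0 Rρ) :=
      tuo_subseq hpconv hφ₂
    have hpc : ∀ k, ContinuousOn (p (φ k)) (Set.Icc 0 Rρ) := fun k =>
      (hp (φ k)).1.continuousOn
    have hqc : ∀ k, ContinuousOn (q (φ k)) (Set.Icc 0 Rη) := fun k =>
      (hq (φ k)).1.continuousOn
    refine ⟨φ, hφ,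
      fun x => Aop Sρ Rρ pbar x + Aop K Rη qbar x,
      fun x => Aop Sη Rη qbar x - α * Aop K Rρ pbar x,
      fun x => Aop (deriv Sρ) Rρ pbar x + Aop (deriv K) Rη qbar x,
      fun x => Aop (deriv Sη) Rη qbar x - α * Aop (deriv K) Rρ pbar x,
      ?_, ?_, ?_, ?_⟩
    · have := (aop_tendstoUniformlyOn hSρ1.continuous hRρ hRρ.le hpc
          hpbarC.continuousOn hpconv').add
        (aop_tendstoUniformlyOn hK1.continuous hRη hRρ.le hqc
          hqbarC.continuousOn hqconv)
      simp only [mixOpF_eq]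
      exact this
    · have heq : (fun k => deriv (mixOpF Sρ K Rρ Rη (p (φ k)) (q (φ k))))
          = fun k x => Aop (deriv Sρ) Rρ (p (φ k)) x + Aop (deriv K) Rη (q (φ k)) x :=
        funext fun k => derivF_eq hSρ1 hK1 hRρ hRη (hpc k) (hqc k)
      rw [heq]
      exact (aop_tendstoUniformlyOn (hSρ.continuous_deriv one_le_two) hRρ hRρ.le hpc
          hpbarC.continuousOn hpconv').add
        (aop_tendstoUniformlyOn (hK.continuous_deriv one_le_two) hRη hRρ.le hqc
          hqbarC.continuousOn hqconv)
    · have := (aop_tendstoUniformlyOn hSη1.continuous hRη hRη.le hqc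
          hqbarC.continuousOn hqconv).sub
        (tuo_const_mul α (aop_tendstoUniformlyOn hK1.continuous hRρ hRη.le hpc
          hpbarC.continuousOn hpconv'))
      simp only [mixOpG_eq]
      exact this
    · have heq : (fun k => deriv (mixOpG Sη K Rρ Rη α (p (φ k)) (q (φ k))))
          = fun k x => Aop (deriv Sη) Rη (q (φ k)) x - α * Aop (deriv K) Rρ (p (φ k)) x :=
        funext fun k => derivG_eq hSη1 hK1 hRρ hRη (hpc k) (hqc k)
      rw [heq]
      exact (aop_tendstoUniformlyOn (hSη.continuous_deriv one_le_two) hRη hRη.le hqc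
          hqbarC.continuousOn hqconv).sub
        (tuo_const_mul α (aop_tendstoUniformlyOn (hK.continuous_deriv one_le_two) hRρ hRη.le hpc
          hpbarC.continuousOn hpconv'))
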